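/- For every real g, the characteristic polynomial of the 7×7 matrix H(g) (defined in the context) equals (x−7)·∏_{k=1}^{3}((x−7)² − k²(4−g²)); equivalently, the eigenvalues of H(g) are 7 and 7 ± k·√(4−g²) for k = 1,2,3 (when g² ≤ 4). -/
import Mathlib

open Matrix Real Polynomial

noncomputable def Htoy (g : ℝ) : Matrix (Fin 7) (Fin 7) ℝ :=
  !![1, 0, Real.sqrt 3 * g, 0, 0, 0, 0;
     0, 3, 0, Real.sqrt 2 * g, 0, 0, 0;
     -(Real.sqrt 3 * g), 0, 5, 0, 2 * g, 0, 0;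
     0, -(Real.sqrt 2 * g), 0, 7, 0, Real.sqrt 2 * g, 0;
     0, 0, -(2 * g), 0, 9, 0, Real.sqrt 3 * g;
     0, 0, 0, -(Real.sqrt 2 * g), 0, 11, 0;
     0, 0, 0, 0, -(Real.sqrt 3 * g), 0, 13]

lemma det4' {R : Type*} [CommRing R] (d1 d3 d5 d7 a c f : R) :
    Matrix.det !![d1,a,0,0; -a,d3,c,0; 0,-c,d5,f; 0,0,-f,d7] =
    d7*(d5*(d1*d3+a*a)+c*c*d1) + f*f*(d1*d3+a*a) := by
  rw [Matrix.det_succ_row_zero]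
  simp [Fin.sum_univ_succ, Matrix.det_fin_three,
    show ((1:Fin 4).succAbove (2:Fin 3)) = 3 from rfl]
  ring

lemma det3' {R : Type*} [CommRing R] (d2 d4 d6 b e : R) :
    Matrix.det !![d2,b,0; -b,d4,e; 0,-e,d6] = d2*d4*d6 + b*b*d6 + e*e*d2 := by
  simp [Matrix.det_fin_three]; ring

def permOE : Fin 7 ≃ Fin 7 where
  toFun := ![0,2,4,6,1,3,5]
  invFun := ![0,4,1,5,2,6,3]
  left_inv := by decide
  right_inv := by decide

set_option maxHeartbeats 1000000 in
lemma det7' {R : Type*} [CommRing R] (d1 d2 d3 d4 d5 d6 d7 a b c e f : R) :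
    Matrix.det !![d1,0,a,0,0,0,0; 0,d2,0,b,0,0,0; -a,0,d3,0,c,0,0;
      0,-b,0,d4,0,e,0; 0,0,-c,0,d5,0,f; 0,0,0,-e,0,d6,0; 0,0,0,0,-f,0,d7] =
    (d7*(d5*(d1*d3+a*a)+c*c*d1) + f*f*(d1*d3+a*a)) * (d2*d4*d6 + b*b*d6 + e*e*d2) := by
  set M : Matrix (Fin 7) (Fin 7) R := !![d1,0,a,0,0,0,0; 0,d2,0,b,0,0,0; -a,0,d3,0,c,0,0;
      0,-b,0,d4,0,e,0; 0,0,-c,0,d5,0,f; 0,0,0,-e,0,d6,0; 0,0,0,0,-f,0,d7] with hM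
  have key : M.submatrix ((finSumFinEquiv (m:=4) (n:=3)).trans permOE) ((finSumFinEquiv (m:=4) (n:=3)).trans permOE)
      = Matrix.fromBlocks !![d1,a,0,0; -a,d3,c,0; 0,-c,d5,f; 0,0,-f,d7]
        0 0 !![d2,b,0; -b,d4,e; 0,-e,d6] := by
    ext i j
    rcases i with i | i <;> rcases j with j | j <;> fin_cases i <;> fin_cases j <;> rfl
  rw [← Matrix.det_submatrix_equiv_self ((finSumFinEquiv (m:=4) (n:=3)).trans permOE) M, key,
    Matrix.det_fromBlocks_zero₂₁, det4', det3']

set_option maxHeartbeats 1000000 in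
theorem stmt_4 (g : ℝ) :
    (Htoy g).charpoly =
      (X - C 7) * ∏ k ∈ Finset.Icc (1 : ℕ) 3,
        ((X - C 7) ^ 2 - C ((k : ℝ) ^ 2 * (4 - g ^ 2))) := by
  have h3 : Real.sqrt 3 * Real.sqrt 3 = 3 := Real.mul_self_sqrt (by norm_num)
  have h2 : Real.sqrt 2 * Real.sqrt 2 = 2 := Real.mul_self_sqrt (by norm_num)
  have hchar : charmatrix (Htoy g) =
      !![X - C 1, 0, -C (Real.sqrt 3 * g), 0, 0, 0, 0;
         0, X - C 3, 0, -C (Real.sqrt 2 * g), 0, 0, 0;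
         -(-C (Real.sqrt 3 * g)), 0, X - C 5, 0, -C (2*g), 0, 0;
         0, -(-C (Real.sqrt 2 * g)), 0, X - C 7, 0, -C (Real.sqrt 2 * g), 0;
         0, 0, -(-C (2*g)), 0, X - C 9, 0, -C (Real.sqrt 3 * g);
         0, 0, 0, -(-C (Real.sqrt 2 * g)), 0, X - C 11, 0;
         0, 0, 0, 0, -(-C (Real.sqrt 3 * g)), 0, X - C 13] := by
    ext i j : 2
    fin_cases i <;> fin_cases j <;>
      simp only [charmatrix_apply, Htoy, Matrix.one_apply, Matrix.of_apply, Matrix.cons_val',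
        Matrix.cons_val_zero, Matrix.cons_val_one, Matrix.cons_val_succ, Matrix.head_cons,
        Matrix.head_fin_const, Matrix.empty_val', Matrix.cons_val_fin_one, map_neg, map_zero,
        if_true, if_false, Fin.isValue, neg_neg, sub_zero, zero_sub, smul_eq_mul, mul_one,
        Matrix.smul_apply] <;>
      norm_num [Matrix.diagonal_apply, Fin.ext_iff]
  rw [Matrix.charpoly, hchar, det7']
  have e3 : (-C (Real.sqrt 3 * g)) * (-C (Real.sqrt 3 * g)) = C (3 * g^2) := by
    rw [neg_mul_neg, ← C_mul]; congr 1; nlinarith [h3]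
  have e2 : (-C (Real.sqrt 2 * g)) * (-C (Real.sqrt 2 * g)) = C (2 * g^2) := by
    rw [neg_mul_neg, ← C_mul]; congr 1; nlinarith [h2]
  have e4 : (-C ((2:ℝ)*g)) * (-C ((2:ℝ)*g)) = C (4 * g^2) := by
    rw [neg_mul_neg, ← C_mul]; congr 1; ring
  rw [e3, e2, e4]
  rw [show (Finset.Icc (1:ℕ) 3) = {1,2,3} by rfl]
  rw [Finset.prod_insert (by decide), Finset.prod_insert (by decide), Finset.prod_singleton]
  push_cast
  simp only [map_sub, _root_.map_mul, map_pow, map_add, map_ofNat, Polynomial.C_1,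
    one_pow, one_mul]
  ring
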